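/- arXiv:2601.13952 — 3 statements merged into one kernel-verified Lean document; each statement's English description precedes it below -/
import Mathlib

section
/- Let n = 4, let i, j ∈ [4] with i ≠ j, let u ∈ C_{i,j} and v ∈ R_{j,i}. Then u is compatible with v. Here, for k ∈ [4], R_k ≤ S([4]^2) is the set of permutations u with u({k} × ([4]∖{k})) = {k} × ([4]∖{k}) and u(x,y) = (x,y) whenever x ≠ k or y = k, and R_{k,ℓ} := {u ∈ R_k : u(k,ℓ) = (k,ℓ)}; symmetrically, C_k ≤ S([4]^2) is the set of permutations u with u(([4]∖{k}) × {k}) = ([4]∖{k}) × {k} and u(x,y) = (x,y) whenever y ≠ k or x = k, and C_{k,ℓ} := {u ∈ C_k : u(ℓ,k) = (ℓ,k)}. -/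
/-- The permutation `u ⊗ 1` of `[n]³`, acting as `(x,y,z) ↦ (u(x,y), z)`. -/
def tensorOne {n : ℕ} (u : Equiv.Perm (Fin n × Fin n)) :
    Equiv.Perm (Fin n × Fin n × Fin n) :=
  (Equiv.prodAssoc (Fin n) (Fin n) (Fin n)).permCongr (u.prodCongr (Equiv.refl (Fin n)))

/-- The permutation `1 ⊗ u` of `[n]³`, acting as `(x,y,z) ↦ (x, u(y,z))`. -/
def oneTensor {n : ℕ} (u : Equiv.Perm (Fin n × Fin n)) :
    Equiv.Perm (Fin n × Fin n × Fin n) :=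
  (Equiv.refl (Fin n)).prodCongr u

/-- `u` is compatible with `v` if `(v ⊗ 1)(1 ⊗ u) = (1 ⊗ u)(v ⊗ 1)` in `S([n]³)`. -/
def Compatible {n : ℕ} (u v : Equiv.Perm (Fin n × Fin n)) : Prop :=
  tensorOne v * oneTensor u = oneTensor u * tensorOne v

/-- Membership in `R_k ≤ S([4]²)`: `u` leaves `{k} × ([4] ∖ {k})` invariant and
fixes `(x,y)` whenever `x ≠ k` or `y = k`. -/
def memR (k : Fin 4) (u : Equiv.Perm (Fin 4 × Fin 4)) : Prop :=
  (⇑u '' {p : Fin 4 × Fin 4 | p.1 = k ∧ p.2 ≠ k} =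
      {p : Fin 4 × Fin 4 | p.1 = k ∧ p.2 ≠ k}) ∧
  ∀ p : Fin 4 × Fin 4, (p.1 ≠ k ∨ p.2 = k) → u p = p

/-- Membership in `R_{k,ℓ}`. -/
def memRij (k l : Fin 4) (u : Equiv.Perm (Fin 4 × Fin 4)) : Prop :=
  memR k u ∧ u (k, l) = (k, l)

/-- Membership in `C_k ≤ S([4]²)`: `u` leaves `([4] ∖ {k}) × {k}` invariant and
fixes `(x,y)` whenever `y ≠ k` or `x = k`. -/
def memC (k : Fin 4) (u : Equiv.Perm (Fin 4 × Fin 4)) : Prop :=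
  (⇑u '' {p : Fin 4 × Fin 4 | p.2 = k ∧ p.1 ≠ k} =
      {p : Fin 4 × Fin 4 | p.2 = k ∧ p.1 ≠ k}) ∧
  ∀ p : Fin 4 × Fin 4, (p.2 ≠ k ∨ p.1 = k) → u p = p

/-- Membership in `C_{k,ℓ}`. -/
def memCij (k l : Fin 4) (u : Equiv.Perm (Fin 4 × Fin 4)) : Prop :=
  memC k u ∧ u (l, k) = (l, k)

/-- In `Fin 4`, if `e` avoids `i`, `j`, `c` (which are pairwise distinct) and so does `d`,
then `e = d`. -/
lemma four_aux : ∀ i j c e d : Fin 4, i ≠ j → c ≠ i → c ≠ j → e ≠ i → e ≠ j → e ≠ c →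
    d ≠ i → d ≠ j → d ≠ c → e = d := by decide

theorem stmt_12 (i j : Fin 4) (hij : i ≠ j)
    (u v : Equiv.Perm (Fin 4 × Fin 4))
    (hu : memCij i j u) (hv : memRij j i v) :
    Compatible u v := by
  obtain ⟨⟨huimg, hufix⟩, huji⟩ := hu
  obtain ⟨⟨hvimg, hvfix⟩, hvji⟩ := hv
  have hucol : ∀ y : Fin 4, y ≠ i → (u (y, i)).2 = i ∧ (u (y, i)).1 ≠ i := by
    intro y hy
    have h : u (y, i) ∈ ⇑u '' {p : Fin 4 × Fin 4 | p.2 = i ∧ p.1 ≠ i} :=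
      ⟨(y, i), ⟨rfl, hy⟩, rfl⟩
    rw [huimg] at h
    exact ⟨h.1, h.2⟩
  have hvrow : ∀ y : Fin 4, y ≠ j → (v (j, y)).1 = j ∧ (v (j, y)).2 ≠ j := by
    intro y hy
    have h : v (j, y) ∈ ⇑v '' {p : Fin 4 × Fin 4 | p.1 = j ∧ p.2 ≠ j} :=
      ⟨(j, y), ⟨rfl, hy⟩, rfl⟩
    rw [hvimg] at h
    exact ⟨h.1, h.2⟩
  apply Equiv.ext
  rintro ⟨x, y, z⟩
  show ((v (x, (u (y, z)).1)).1, (v (x, (u (y, z)).1)).2, (u (y, z)).2)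
      = ((v (x, y)).1, u ((v (x, y)).2, z))
  by_cases hz : z = i
  · subst z
    by_cases hy : y = i
    · subst y
      have h1 : u (i, i) = (i, i) := hufix _ (Or.inr rfl)
      by_cases hx : x = j
      · subst x
        simp [h1, hvji]
      · have h2 : v (x, i) = (x, i) := hvfix _ (Or.inl hx)
        simp [h1, h2]
    · have huc := hucol y hy
      by_cases hx : x = j
      · subst x
        by_cases hyj : y = j
        · subst y
          have h2 : v (j, j) = (j, j) := hvfix _ (Or.inr rfl)
          simp [huji, h2]
        · -- the hard case: x = j, z = i, y ∉ {i, j}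
          have hvr := hvrow y hyj
          obtain ⟨a, ha⟩ : ∃ a, u (y, i) = (a, i) :=
            ⟨(u (y, i)).1, Prod.ext rfl huc.1⟩
          obtain ⟨b, hb⟩ : ∃ b, v (j, y) = (j, b) :=
            ⟨(v (j, y)).2, Prod.ext hvr.1 rfl⟩
          have hai : a ≠ i := by have := huc.2; rwa [ha] at this
          have haj : a ≠ j := by
            intro h
            apply hyj
            have h2 : u (y, i) = u (j, i) := by rw [ha, huji, h]
            exact congrArg Prod.fst (u.injective h2)
          have hbj : b ≠ j := by have := hvr.2; rwa [hb] at this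
          have hbi : b ≠ i := by
            intro h
            apply hy
            have h2 : v (j, y) = v (j, i) := by rw [hb, hvji, h]
            exact congrArg Prod.snd (v.injective h2)
          obtain ⟨c, hc⟩ : ∃ c, v (j, a) = (j, c) :=
            ⟨(v (j, a)).2, Prod.ext (hvrow a haj).1 rfl⟩
          obtain ⟨d, hd⟩ : ∃ d, u (b, i) = (d, i) :=
            ⟨(u (b, i)).1, Prod.ext rfl (hucol b hbi).1⟩
          have hcj : c ≠ j := by have := (hvrow a haj).2; rwa [hc] at this
          have hci : c ≠ i := by
            intro h
            apply hai
            have h2 : v (j, a) = v (j, i) := by rw [hc, hvji, h]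
            exact congrArg Prod.snd (v.injective h2)
          have hdi : d ≠ i := by have := (hucol b hbi).2; rwa [hd] at this
          have hdj : d ≠ j := by
            intro h
            apply hbj
            have h2 : u (b, i) = u (j, i) := by rw [hd, huji, h]
            exact congrArg Prod.fst (u.injective h2)
          suffices hcd : c = d by rw [ha, hb, hc, hd, hcd]
          by_cases hay : a = y
          · subst a
            -- u fixes (y, i)
            by_cases hby : b = y
            · subst b
              have h1 : c = y := by
                have h2 : v (j, y) = v (j, y) := rfl
                have := hc.symm.trans hb
                exact (Prod.ext_iff.mp this).2
              have h2 : d = y := by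
                have := hd.symm.trans ha
                exact (Prod.ext_iff.mp this).1
              rw [h1, h2]
            · -- b is the fourth element
              have hcb : c = b := (Prod.ext_iff.mp (hc.symm.trans hb)).2
              have hdy : d ≠ y := by
                intro h
                apply hby
                have h2 : u (b, i) = u (y, i) := by rw [hd, ha, h]
                exact congrArg Prod.fst (u.injective h2)
              have hdb : d = b :=
                four_aux i j y d b hij hy hyj hdi hdj hdy hbi hbj hby
              rw [hcb, hdb]
          · -- a is the fourth element; u swaps y and a on column i
            have hua : u (a, i) = (y, i) := by
              obtain ⟨e, he⟩ : ∃ e, u (a, i) = (e, i) :=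
                ⟨(u (a, i)).1, Prod.ext rfl (hucol a hai).1⟩
              have hei : e ≠ i := by have := (hucol a hai).2; rwa [he] at this
              have hej : e ≠ j := by
                intro h
                apply haj
                have h2 : u (a, i) = u (j, i) := by rw [he, huji, h]
                exact congrArg Prod.fst (u.injective h2)
              have hea : e ≠ a := by
                intro h
                apply hay
                have h2 : u (a, i) = u (y, i) := by rw [he, ha, h]
                exact congrArg Prod.fst (u.injective h2)
              have : e = y :=
                four_aux i j a e y hij hai haj hei hej hea hy hyj
                  (fun h => hay h.symm)
              rw [he, this]
            by_cases hby : b = y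
            · subst b
              have hda : d = a := (Prod.ext_iff.mp (hd.symm.trans ha)).1
              have hcy : c ≠ y := by
                intro h
                apply hay
                have h2 : v (j, a) = v (j, y) := by rw [hc, hb, h]
                exact congrArg Prod.snd (v.injective h2)
              have hca : c = a :=
                four_aux i j y c a hij hy hyj hci hcj hcy hai haj hay
              rw [hca, hda]
            · -- b = a, the fourth element
              have hba : b = a :=
                four_aux i j y b a hij hy hyj hbi hbj hby hai haj hay
              have hdy : d = y := by
                have := hd.symm.trans (by rw [hba]; exact hua : u (b, i) = (y, i))
                exact (Prod.ext_iff.mp this).1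
              have hca : c ≠ a := by
                intro h
                apply hay
                have h2 : v (j, a) = v (j, y) := by rw [hc, hb, hba, h]
                exact congrArg Prod.snd (v.injective h2)
              have hcy : c = y :=
                four_aux i j a c y hij hai haj hci hcj hca hy hyj
                  (fun h => hay h.symm)
              rw [hcy, hdy]
      · -- x ≠ j, z = i : v fixes row entries
        have h1 : v (x, y) = (x, y) := hvfix _ (Or.inl hx)
        have h2 : v (x, (u (y, i)).1) = (x, (u (y, i)).1) := hvfix _ (Or.inl hx)
        rw [h1, h2]
  · -- z ≠ i : u fixes everything involved
    have h1 : u (y, z) = (y, z) := hufix _ (Or.inl hz)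
    have h2 : u ((v (x, y)).2, z) = ((v (x, y)).2, z) := hufix _ (Or.inl hz)
    rw [h1, h2]
end

section
/- Let n ≥ 1, let V be a bicompatible subgroup of S([n]^2), and let A ⊆ [n] be simultaneously a connected component of the graph G_R and a connected component of the graph G_C. Then for every v ∈ V there exist permutations σ_v, τ_v ∈ S(A) such that v(x,y) = (σ_v(x), τ_v(y)) for all x, y ∈ A. -/
/-- The graph `G_R` on `[n]` attached to a subgroup `V ≤ S([n]²)`: distinct
`a, b` are adjacent iff some `v ∈ V` maps some point of row `a` to a point of
row `b`. -/
def GR {n : ℕ} (V : Subgroup (Equiv.Perm (Fin n × Fin n))) : SimpleGraph (Fin n) where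
  Adj a b := a ≠ b ∧ ∃ x y : Fin n, ∃ v ∈ V, v (a, x) = (b, y)
  symm := by
    constructor
    rintro a b ⟨hab, x, y, v, hv, hvab⟩
    refine ⟨hab.symm, y, x, v⁻¹, V.inv_mem hv, ?_⟩
    rw [← hvab]
    exact Equiv.symm_apply_apply v (a, x)
  loopless := ⟨fun a h => h.1 rfl⟩

/-- The graph `G_C` on `[n]` attached to a subgroup `V ≤ S([n]²)`: distinct
`a, b` are adjacent iff some `v ∈ V` maps some point of column `a` to a point
of column `b`. -/
def GC {n : ℕ} (V : Subgroup (Equiv.Perm (Fin n × Fin n))) : SimpleGraph (Fin n) where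
  Adj a b := a ≠ b ∧ ∃ x y : Fin n, ∃ v ∈ V, v (x, a) = (y, b)
  symm := by
    constructor
    rintro a b ⟨hab, x, y, v, hv, hvab⟩
    refine ⟨hab.symm, y, x, v⁻¹, V.inv_mem hv, ?_⟩
    rw [← hvab]
    exact Equiv.symm_apply_apply v (x, a)
  loopless := ⟨fun a h => h.1 rfl⟩


lemma compat_apply {n : ℕ} {u w : Equiv.Perm (Fin n × Fin n)} (h : Compatible u w)
    (x y z : Fin n) :
    ((w (x, (u (y, z)).1)).1, (w (x, (u (y, z)).1)).2, (u (y, z)).2)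
      = ((w (x, y)).1, u ((w (x, y)).2, z)) := by
  have := congrFun (congrArg (fun e => (e : Equiv.Perm _).toFun) h) (x, y, z)
  simpa [tensorOne, oneTensor, Equiv.permCongr_apply, Equiv.prodCongr_apply,
    Equiv.prodAssoc, Equiv.Perm.mul_apply] using this

/-- F1 -/
lemma compat_fst {n : ℕ} {u w : Equiv.Perm (Fin n × Fin n)} (h : Compatible u w)
    (x y z : Fin n) : (w (x, (u (y, z)).1)).1 = (w (x, y)).1 :=
  congrArg (fun p => p.1) (compat_apply h x y z)

/-- F3 -/
lemma compat_snd {n : ℕ} {u w : Equiv.Perm (Fin n × Fin n)} (h : Compatible u w)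
    (x y z : Fin n) : (u (y, z)).2 = (u ((w (x, y)).2, z)).2 :=
  congrArg (fun p => p.2.2) (compat_apply h x y z)

/-- fst of v(x,·) is constant on G_R components. -/
lemma fst_const {n : ℕ} {V : Subgroup (Equiv.Perm (Fin n × Fin n))}
    (hV : ∀ u ∈ V, ∀ v ∈ V, Compatible u v)
    {v : Equiv.Perm (Fin n × Fin n)} (hv : v ∈ V) (x : Fin n)
    {y y' : Fin n} (h : (GR V).Reachable y y') : (v (x, y)).1 = (v (x, y')).1 := by
  obtain ⟨p⟩ := h
  induction p with
  | nil => rfl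
  | cons hadj p ih =>
    rename_i a b c
    obtain ⟨_, z, w', u, hu, huv⟩ := hadj
    have h1 := compat_fst (hV u hu v hv) x a z
    rw [huv] at h1
    exact h1.symm.trans ih

/-- snd of v(·,z) is constant on G_C components. -/
lemma snd_const {n : ℕ} {V : Subgroup (Equiv.Perm (Fin n × Fin n))}
    (hV : ∀ u ∈ V, ∀ v ∈ V, Compatible u v)
    {v : Equiv.Perm (Fin n × Fin n)} (hv : v ∈ V) (z : Fin n)
    {y y' : Fin n} (h : (GC V).Reachable y y') : (v (y, z)).2 = (v (y', z)).2 := by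
  obtain ⟨p⟩ := h
  induction p with
  | nil => rfl
  | cons hadj p ih =>
    rename_i a b c
    obtain ⟨_, p', q', w, hw, hwv⟩ := hadj
    have h1 := compat_snd (hV v hv w hw) p' a z
    rw [hwv] at h1
    exact h1.trans ih

lemma reach_fst {n : ℕ} {V : Subgroup (Equiv.Perm (Fin n × Fin n))}
    {v : Equiv.Perm (Fin n × Fin n)} (hv : v ∈ V) (x y : Fin n) :
    (GR V).Reachable x (v (x, y)).1 := by
  by_cases h : x = (v (x, y)).1
  · exact h ▸ SimpleGraph.Reachable.refl x
  · exact SimpleGraph.Adj.reachable ⟨h, y, (v (x, y)).2, v, hv, rfl⟩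

lemma reach_snd {n : ℕ} {V : Subgroup (Equiv.Perm (Fin n × Fin n))}
    {v : Equiv.Perm (Fin n × Fin n)} (hv : v ∈ V) (x y : Fin n) :
    (GC V).Reachable y (v (x, y)).2 := by
  by_cases h : y = (v (x, y)).2
  · exact h ▸ SimpleGraph.Reachable.refl y
  · exact SimpleGraph.Adj.reachable ⟨h, x, (v (x, y)).1, v, hv, rfl⟩

theorem stmt_16 (n : ℕ) (hn : 1 ≤ n)
    (V : Subgroup (Equiv.Perm (Fin n × Fin n)))
    (hV : ∀ u ∈ V, ∀ v ∈ V, Compatible u v)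
    (A : Set (Fin n))
    (hAR : ∃ a₀ : Fin n, A = {x | (GR V).Reachable a₀ x})
    (hAC : ∃ a₁ : Fin n, A = {x | (GC V).Reachable a₁ x}) :
    ∀ v ∈ V, ∃ σ τ : Equiv.Perm A,
      ∀ (x y : Fin n) (hx : x ∈ A) (hy : y ∈ A),
        v (x, y) = ((σ ⟨x, hx⟩ : A).val, (τ ⟨y, hy⟩ : A).val) := by
  obtain ⟨a₀, hA₀⟩ := hAR
  obtain ⟨a₁, hA₁⟩ := hAC
  have ha₀ : a₀ ∈ A := by rw [hA₀]; exact SimpleGraph.Reachable.refl a₀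
  -- reachability characterizations of membership
  have memR : ∀ {x y : Fin n}, x ∈ A → (GR V).Reachable x y → y ∈ A := by
    intro x y hx h
    rw [hA₀] at hx ⊢
    exact hx.trans h
  have memC : ∀ {x y : Fin n}, x ∈ A → (GC V).Reachable x y → y ∈ A := by
    intro x y hx h
    rw [hA₁] at hx ⊢
    exact hx.trans h
  have reachR : ∀ {x y : Fin n}, x ∈ A → y ∈ A → (GR V).Reachable x y := by
    intro x y hx hy; rw [hA₀] at hx hy; exact hx.symm.trans hy
  have reachC : ∀ {x y : Fin n}, x ∈ A → y ∈ A → (GC V).Reachable x y := by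
    intro x y hx hy; rw [hA₁] at hx hy; exact hx.symm.trans hy
  intro v hv
  -- key: on A × A, v(x,y) = (fst v(x,a₀), snd v(a₀,y))
  have key : ∀ (x y : Fin n), x ∈ A → y ∈ A →
      v (x, y) = ((v (x, a₀)).1, (v (a₀, y)).2) := by
    intro x y hx hy
    have h1 : (v (x, y)).1 = (v (x, a₀)).1 := fst_const hV hv x (reachR hy ha₀)
    have h2 : (v (x, y)).2 = (v (a₀, y)).2 := snd_const hV hv y (reachC hx ha₀)
    rw [← h1, ← h2]
  have hσmem : ∀ x ∈ A, (v (x, a₀)).1 ∈ A := fun x hx => memR hx (reach_fst hv x a₀)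
  have hτmem : ∀ y ∈ A, (v (a₀, y)).2 ∈ A := fun y hy => memC hy (reach_snd hv a₀ y)
  set f : A → A := fun x => ⟨(v (x.1, a₀)).1, hσmem x.1 x.2⟩ with hf
  set g : A → A := fun y => ⟨(v (a₀, y.1)).2, hτmem y.1 y.2⟩ with hg
  have hfinj : Function.Injective f := by
    intro x x' h
    have : v (x.1, a₀) = v (x'.1, a₀) := by
      rw [key x.1 a₀ x.2 ha₀, key x'.1 a₀ x'.2 ha₀]
      simp only [Subtype.ext_iff] at h
      exact Prod.ext h rfl
    have := v.injective this
    exact Subtype.ext (congrArg Prod.fst this)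
  have hginj : Function.Injective g := by
    intro y y' h
    have : v (a₀, y.1) = v (a₀, y'.1) := by
      rw [key a₀ y.1 ha₀ y.2, key a₀ y'.1 ha₀ y'.2]
      simp only [Subtype.ext_iff] at h
      exact Prod.ext rfl h
    have := v.injective this
    exact Subtype.ext (congrArg Prod.snd this)
  refine ⟨Equiv.ofBijective f (Finite.injective_iff_bijective.mp hfinj),
    Equiv.ofBijective g (Finite.injective_iff_bijective.mp hginj), ?_⟩
  intro x y hx hy
  exact key x y hx hy
end

section
/- Let n ≥ 1, let V be a bicompatible subgroup of S([n]^2), and let t ∈ [n] be an isolated vertex of the graph G_R (i.e. no edge of G_R is incident to t). Then every vertex in the connected component of t in the graph G_C is an isolated vertex of G_R. -/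
lemma key_step {n : ℕ} (V : Subgroup (Equiv.Perm (Fin n × Fin n)))
    (hV : ∀ u ∈ V, ∀ v ∈ V, Compatible u v) {a b : Fin n}
    (hP : ∀ w ∈ V, ∀ y, (w (a, y)).1 = a) (hab : (GC V).Adj a b) :
    ∀ w ∈ V, ∀ y, (w (b, y)).1 = b := by
  obtain ⟨hne, c, d, u, hu, huca⟩ := hab
  intro w hw y
  have hc := hV w hw u hu
  have h : (tensorOne u * oneTensor w) (c, a, y)
      = (oneTensor w * tensorOne u) (c, a, y) := by rw [hc]
  simp only [tensorOne, oneTensor, Equiv.Perm.mul_apply, Equiv.permCongr_apply,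
    Equiv.prodCongr_apply, Equiv.prodAssoc_apply, Equiv.prodAssoc_symm_apply,
    Equiv.coe_refl, Prod.map_apply, id_eq, Prod.mk.injEq] at h
  rw [show (w (a, y)).1 = a from hP w hw y] at h
  rw [show u (c, a) = (d, b) from huca] at h
  exact (congrArg Prod.fst h.2).symm

theorem stmt_17 (n : ℕ) (hn : 1 ≤ n)
    (V : Subgroup (Equiv.Perm (Fin n × Fin n)))
    (hV : ∀ u ∈ V, ∀ v ∈ V, Compatible u v)
    (t : Fin n) (ht : ∀ b : Fin n, ¬ (GR V).Adj t b) :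
    ∀ s : Fin n, (GC V).Reachable t s → ∀ b : Fin n, ¬ (GR V).Adj s b := by
  have hPt : ∀ w ∈ V, ∀ y, (w (t, y)).1 = t := by
    intro w hw y
    by_contra h
    exact ht (w (t, y)).1 ⟨fun he => h he.symm, y, (w (t, y)).2, w, hw, Prod.mk.eta.symm ▸ rfl⟩
  have main : ∀ (a s : Fin n), (GC V).Walk a s →
      (∀ w ∈ V, ∀ y, (w (a, y)).1 = a) → ∀ w ∈ V, ∀ y, (w (s, y)).1 = s := by
    intro a s p
    induction p with
    | nil => exact fun h => h
    | cons h _ ih => exact fun ha => ih (key_step V hV ha h)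
  intro s hreach b hadj
  obtain ⟨p⟩ := hreach
  have hPs := main t s p hPt
  obtain ⟨hne, x, y, v, hv, hvs⟩ := hadj
  exact hne ((hPs v hv x).symm.trans (congrArg Prod.fst hvs))
end
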